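/- Let B ⊆ ℝⁿ be a compact set, let m be a finite Borel measure on ℝⁿ whose support equals B (every open set meeting B has positive m-measure), and let T : ℝⁿ → ℝ^M be a polynomial map with components T₁,…,T_M. For an integer k ≥ 0 let Q_k = {λ ∈ ℝ^M : for every real polynomial a in n variables of total degree at most k, ∫_B (1 + ∑ᵢ λᵢTᵢ(x))·a(x)² dm(x) ≥ 0}. Then ⋂_{k≥0} Q_k = {λ ∈ ℝ^M : 1 + ∑ᵢ λᵢTᵢ(x) ≥ 0 for all x ∈ B}; in particular, {λ : 1 + ∑ᵢ λᵢTᵢ(x) ≥ 0 on B} ⊆ Q_k for every k. -/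

import Mathlib

open MeasureTheory MvPolynomial

/-- The `k`-th relaxation `Q_k`: those `l ∈ ℝ^M` for which the bilinear form
`(a,b) ↦ ∫_B (1 + ∑ᵢ lᵢ Tᵢ(x)) a(x) b(x) dm(x)` is positive semidefinite on polynomials of
degree at most `k`, i.e. `∫_B (1 + ∑ᵢ lᵢ Tᵢ(x)) a(x)² dm(x) ≥ 0` for all such `a`. -/
def Qset {n M : ℕ} (B : Set (Fin n → ℝ)) (μ : Measure (Fin n → ℝ))
    (T : Fin M → MvPolynomial (Fin n) ℝ) (k : ℕ) : Set (Fin M → ℝ) :=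
  {l | ∀ a : MvPolynomial (Fin n) ℝ, a.totalDegree ≤ k →
    0 ≤ ∫ x in B, (1 + ∑ i, l i * eval x (T i)) * (eval x a) ^ 2 ∂μ}

set_option maxHeartbeats 1000000 in
/-- Let `B ⊆ ℝⁿ` be compact, `m` a finite Borel measure supported exactly on `B`, and
`T : ℝⁿ → ℝ^M` a polynomial map.  Then `⋂ₖ Q_k` equals the set of `l` with
`1 + ∑ᵢ lᵢ Tᵢ ≥ 0` on `B` (the polar of the convex hull of `T(B)`); in particular the
latter set is contained in every `Q_k`. -/
theorem relaxation_intersection_eq_polar {n M : ℕ}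
    (B : Set (Fin n → ℝ)) (hB : IsCompact B)
    (μ : Measure (Fin n → ℝ)) [IsFiniteMeasure μ]
    (hμB : μ Bᶜ = 0)
    (hsupp : ∀ U : Set (Fin n → ℝ), IsOpen U → (U ∩ B).Nonempty → 0 < μ U)
    (T : Fin M → MvPolynomial (Fin n) ℝ) :
    (⋂ k : ℕ, Qset B μ T k) =
      {l : Fin M → ℝ | ∀ x ∈ B, 0 ≤ 1 + ∑ i, l i * eval x (T i)} ∧
    ∀ k : ℕ, {l : Fin M → ℝ | ∀ x ∈ B, 0 ≤ 1 + ∑ i, l i * eval x (T i)} ⊆ Qset B μ T k := by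
  classical
  have hBmeas : MeasurableSet B := hB.isClosed.measurableSet
  have heasy : ∀ k : ℕ, {l : Fin M → ℝ | ∀ x ∈ B, 0 ≤ 1 + ∑ i, l i * eval x (T i)}
      ⊆ Qset B μ T k := by
    intro k l hl a _
    exact setIntegral_nonneg hBmeas fun x hx => mul_nonneg (hl x hx) (sq_nonneg _)
  refine ⟨Set.Subset.antisymm ?_ fun l hl => Set.mem_iInter.2 fun k => heasy k hl, heasy⟩
  intro l hl x₀ hx₀
  by_contra hneg
  push_neg at hneg
  set f : (Fin n → ℝ) → ℝ := fun x => 1 + ∑ i, l i * eval x (T i) with hfdef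
  have hfc : Continuous f := by
    rw [hfdef]
    exact continuous_const.add
      (continuous_finset_sum _ fun i _ => continuous_const.mul (MvPolynomial.continuous_eval (T i)))
  have hfx₀ : f x₀ < 0 := by simp only [hfdef]; linarith
  obtain ⟨c, hc, hcx⟩ : ∃ c, 0 < c ∧ f x₀ < -c := ⟨-f x₀ / 2, by linarith, by linarith⟩
  -- a bound for B
  obtain ⟨D', hD'1, hDB⟩ : ∃ D', (1:ℝ) ≤ D' ∧ B ⊆ Metric.closedBall x₀ D' := by
    obtain ⟨D, hD⟩ := hB.isBounded.subset_closedBall x₀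
    exact ⟨max D 1, le_max_right _ _,
      hD.trans (Metric.closedBall_subset_closedBall (le_max_left _ _))⟩
  have hD'0 : 0 < D' := by linarith
  -- a radius on which f < -c
  obtain ⟨r, hrpos, hrD', hrball⟩ :
      ∃ r, 0 < r ∧ r ≤ D' ∧ ∀ x ∈ Metric.ball x₀ r, f x < -c := by
    have hopen : IsOpen {x | f x < -c} := isOpen_lt hfc continuous_const
    obtain ⟨r₀, hr₀pos, hr₀⟩ := Metric.isOpen_iff.1 hopen x₀
      (by simp only [Set.mem_setOf_eq]; linarith)
    exact ⟨min r₀ D', lt_min hr₀pos hD'0, min_le_right _ _,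
      fun x hx => hr₀ (Metric.ball_subset_ball (min_le_left _ _) hx)⟩
  -- a normalizing constant
  obtain ⟨E, hE0, hD'E, hnD⟩ :
      ∃ E, 0 < E ∧ D' ≤ E ∧ (n : ℝ) * D' ^ 2 ≤ E ^ 2 := by
    refine ⟨((n:ℝ) + 1) * D', by positivity, ?_, ?_⟩
    · nlinarith [Nat.cast_nonneg (α := ℝ) n]
    · nlinarith [Nat.cast_nonneg (α := ℝ) n, sq_nonneg D']
  have hE2 : 0 < E ^ 2 := by positivity
  -- a smaller radius
  obtain ⟨s, hspos, hsr, hns⟩ :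
      ∃ s, 0 < s ∧ s ≤ r ∧ (n : ℝ) * s ^ 2 < r ^ 2 := by
    refine ⟨r / ((n:ℝ) + 1), by positivity, ?_, ?_⟩
    · rw [div_le_iff₀ (by positivity)]
      nlinarith [Nat.cast_nonneg (α := ℝ) n]
    · rw [div_pow, mul_div_assoc']
      rw [div_lt_iff₀ (by positivity)]
      nlinarith [Nat.cast_nonneg (α := ℝ) n, mul_pos hrpos hrpos,
        sq_nonneg ((n:ℝ) * r)]
  -- the polynomial bump
  obtain ⟨q, hq⟩ : ∃ q : MvPolynomial (Fin n) ℝ,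
      ∀ x : Fin n → ℝ, eval x q = 1 - (E ^ 2)⁻¹ * ∑ i, (x i - x₀ i) ^ 2 :=
    ⟨1 - MvPolynomial.C (E ^ 2)⁻¹ * ∑ i, (MvPolynomial.X i - MvPolynomial.C (x₀ i)) ^ 2,
      fun x => by simp⟩
  have hqc : Continuous fun x => eval x q := MvPolynomial.continuous_eval q
  -- bounds for the bump on B
  have hgB : ∀ x ∈ B, 0 ≤ eval x q := by
    intro x hx
    have hsum : ∑ i, (x i - x₀ i) ^ 2 ≤ E ^ 2 := by
      have hterm : ∀ i : Fin n, (x i - x₀ i) ^ 2 ≤ D' ^ 2 := by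
        intro i
        have h1 : dist (x i) (x₀ i) ≤ dist x x₀ := dist_le_pi_dist x x₀ i
        have h2 : dist x x₀ ≤ D' := Metric.mem_closedBall.1 (hDB hx)
        have h3 : |x i - x₀ i| ≤ D' := by rw [← Real.dist_eq]; linarith
        have h4 := abs_le.1 h3
        nlinarith [h4.1, h4.2]
      calc ∑ i, (x i - x₀ i) ^ 2 ≤ ∑ _i : Fin n, D' ^ 2 :=
            Finset.sum_le_sum fun i _ => hterm i
        _ = (n : ℝ) * D' ^ 2 := by simp [mul_comm]
        _ ≤ E ^ 2 := hnD
    have h5 : (E ^ 2)⁻¹ * ∑ i, (x i - x₀ i) ^ 2 ≤ 1 := by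
      rw [inv_mul_le_iff₀ hE2]; simpa using hsum
    rw [hq x]; linarith
  have hg1 : ∀ x ∈ B, eval x q ≤ 1 := by
    intro x hx
    have h1 : 0 ≤ ∑ i, (x i - x₀ i) ^ 2 := Finset.sum_nonneg fun i _ => sq_nonneg _
    have h2 : 0 ≤ (E ^ 2)⁻¹ * ∑ i, (x i - x₀ i) ^ 2 := by positivity
    rw [hq x]; linarith
  -- the two thresholds
  obtain ⟨α, β, hβ0, hβα, hgball, hgout⟩ :
      ∃ α β : ℝ, 0 ≤ β ∧ β < α ∧ (∀ x ∈ Metric.ball x₀ s, α ≤ eval x q) ∧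
        ∀ x, x ∉ Metric.ball x₀ r → eval x q ≤ β := by
    refine ⟨1 - (E ^ 2)⁻¹ * ((n : ℝ) * s ^ 2), 1 - (E ^ 2)⁻¹ * r ^ 2, ?_, ?_, ?_, ?_⟩
    · have h1 : r ^ 2 ≤ E ^ 2 := by nlinarith
      have h2 : (E ^ 2)⁻¹ * r ^ 2 ≤ 1 := by rw [inv_mul_le_iff₀ hE2]; simpa using h1
      linarith
    · have h6 : (E ^ 2)⁻¹ * ((n:ℝ) * s ^ 2) < (E ^ 2)⁻¹ * r ^ 2 :=
        mul_lt_mul_of_pos_left hns (by positivity)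
      linarith
    · intro x hx
      have hsum : ∑ i, (x i - x₀ i) ^ 2 ≤ (n : ℝ) * s ^ 2 := by
        have hterm : ∀ i : Fin n, (x i - x₀ i) ^ 2 ≤ s ^ 2 := by
          intro i
          have h1 : dist (x i) (x₀ i) ≤ dist x x₀ := dist_le_pi_dist x x₀ i
          have h2 : dist x x₀ < s := Metric.mem_ball.1 hx
          have h3 : |x i - x₀ i| ≤ s := by rw [← Real.dist_eq]; linarith
          have h4 := abs_le.1 h3
          nlinarith [h4.1, h4.2]
        calc ∑ i, (x i - x₀ i) ^ 2 ≤ ∑ _i : Fin n, s ^ 2 :=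
              Finset.sum_le_sum fun i _ => hterm i
          _ = (n : ℝ) * s ^ 2 := by simp [mul_comm]
      have h5 : (E ^ 2)⁻¹ * ∑ i, (x i - x₀ i) ^ 2 ≤ (E ^ 2)⁻¹ * ((n:ℝ) * s ^ 2) :=
        mul_le_mul_of_nonneg_left hsum (by positivity)
      rw [hq x]; linarith
    · intro x hx
      have hdist : ¬ dist x x₀ < r := fun h => hx (Metric.mem_ball.2 h)
      have hex : ∃ i, r ≤ dist (x i) (x₀ i) := by
        by_contra hcon
        push_neg at hcon
        exact hdist ((dist_pi_lt_iff hrpos).2 hcon)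
      obtain ⟨i, hi⟩ := hex
      have hsum : r ^ 2 ≤ ∑ j, (x j - x₀ j) ^ 2 := by
        have h1 : r ^ 2 ≤ (x i - x₀ i) ^ 2 := by
          rw [Real.dist_eq] at hi
          nlinarith [abs_nonneg (x i - x₀ i), sq_abs (x i - x₀ i), hrpos.le]
        exact h1.trans (Finset.single_le_sum (fun j _ => sq_nonneg (x j - x₀ j))
          (Finset.mem_univ i))
      have h5 : (E ^ 2)⁻¹ * r ^ 2 ≤ (E ^ 2)⁻¹ * ∑ j, (x j - x₀ j) ^ 2 :=
        mul_le_mul_of_nonneg_left hsum (by positivity)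
      rw [hq x]; linarith
  have hα0 : 0 < α := lt_of_le_of_lt hβ0 hβα
  -- an upper bound for f on B
  obtain ⟨F, hF1, hFb⟩ : ∃ F : ℝ, 1 ≤ F ∧ ∀ y ∈ B, f y ≤ F := by
    obtain ⟨z, hzB, hz⟩ := hB.exists_isMaxOn ⟨x₀, hx₀⟩ hfc.continuousOn
    exact ⟨max (f z) 1, le_max_right _ _, fun y hy => (hz hy).trans (le_max_left _ _)⟩
  have hF0 : 0 < F := by linarith
  -- measure positivity on the small ball
  obtain ⟨m, hm, hmeq⟩ : ∃ m : ℝ, 0 < m ∧ (μ (B ∩ Metric.ball x₀ s)).toReal = m := by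
    have hμball : 0 < μ (Metric.ball x₀ s) :=
      hsupp _ Metric.isOpen_ball ⟨x₀, Metric.mem_ball_self hspos, hx₀⟩
    have hμS : 0 < μ (B ∩ Metric.ball x₀ s) := by
      have h1 := measure_le_inter_add_diff μ (Metric.ball x₀ s) B
      have h2 : μ (Metric.ball x₀ s \ B) = 0 :=
        measure_mono_null (Set.diff_subset_compl _ _) hμB
      rw [Set.inter_comm]
      calc (0:ENNReal) < μ (Metric.ball x₀ s) := hμball
        _ ≤ μ (Metric.ball x₀ s ∩ B) := by rw [h2] at h1; simpa using h1
    exact ⟨_, ENNReal.toReal_pos hμS.ne' (measure_ne_top μ _), rfl⟩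
  obtain ⟨MB, hMB, hMBeq⟩ : ∃ MB : ℝ, 0 ≤ MB ∧ (μ (B \ Metric.ball x₀ s)).toReal = MB :=
    ⟨_, ENNReal.toReal_nonneg, rfl⟩
  -- geometric decay
  obtain ⟨t, ht0, ht1, htβα⟩ : ∃ t : ℝ, 0 ≤ t ∧ t < 1 ∧ β ^ 2 = t * α ^ 2 := by
    refine ⟨(β / α) ^ 2, sq_nonneg _, ?_, by field_simp⟩
    have hba : β / α < 1 := (div_lt_one hα0).2 hβα
    have hba0 : 0 ≤ β / α := div_nonneg hβ0 hα0.le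
    nlinarith
  have hFMB : 0 < F * MB + 1 := by nlinarith
  obtain ⟨N, hN⟩ : ∃ N : ℕ, t ^ N < c * m / (F * MB + 1) :=
    ((tendsto_pow_atTop_nhds_zero_of_lt_one ht0 ht1).eventually
      (gt_mem_nhds (by positivity))).exists
  -- the key nonnegativity from membership in all Q_k
  have hint : 0 ≤ ∫ x in B, f x * ((eval x q) ^ N) ^ 2 ∂μ := by
    have h0 := Set.mem_iInter.1 hl (q ^ N).totalDegree (q ^ N) le_rfl
    simpa only [hfdef, map_pow] using h0
  have hInt : IntegrableOn (fun x => f x * ((eval x q) ^ N) ^ 2) B μ :=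
    ContinuousOn.integrableOn_compact hB (hfc.mul ((hqc.pow N).pow 2)).continuousOn
  have hdisj : Disjoint (B ∩ Metric.ball x₀ s) (B \ Metric.ball x₀ s) :=
    Set.disjoint_left.2 fun x hx1 hx2 => hx2.2 hx1.2
  have hsplit : (∫ x in B, f x * ((eval x q) ^ N) ^ 2 ∂μ)
      = (∫ x in B ∩ Metric.ball x₀ s, f x * ((eval x q) ^ N) ^ 2 ∂μ)
        + ∫ x in B \ Metric.ball x₀ s, f x * ((eval x q) ^ N) ^ 2 ∂μ := by
    rw [← setIntegral_union hdisj (hBmeas.diff Metric.isOpen_ball.measurableSet)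
      (hInt.mono_set Set.inter_subset_left) (hInt.mono_set Set.diff_subset),
      Set.inter_union_diff]
  have hA0 : (0:ℝ) < α ^ 2 := by positivity
  have hApow : 0 < (α ^ 2) ^ N := pow_pos hA0 N
  have hBt0 : (0:ℝ) ≤ β ^ 2 := sq_nonneg _
  -- bound on the small ball
  have hb1 : (∫ x in B ∩ Metric.ball x₀ s, f x * ((eval x q) ^ N) ^ 2 ∂μ)
      ≤ m * (-(c * (α ^ 2) ^ N)) := by
    have hpt : ∀ x ∈ B ∩ Metric.ball x₀ s,
        f x * ((eval x q) ^ N) ^ 2 ≤ -(c * (α ^ 2) ^ N) := by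
      rintro x ⟨hxB, hxb⟩
      have hfx : f x ≤ -c := (hrball x (Metric.ball_subset_ball hsr hxb)).le
      have hgx : α ≤ eval x q := hgball x hxb
      have h2 : α ^ 2 ≤ (eval x q) ^ 2 := by nlinarith
      have h3 : (α ^ 2) ^ N ≤ ((eval x q) ^ 2) ^ N := pow_le_pow_left₀ hA0.le h2 N
      have hP0 : 0 < ((eval x q) ^ 2) ^ N := lt_of_lt_of_le hApow h3
      have h4 : f x * ((eval x q) ^ 2) ^ N ≤ -c * ((eval x q) ^ 2) ^ N :=
        mul_le_mul_of_nonneg_right hfx hP0.le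
      have h5 : -c * ((eval x q) ^ 2) ^ N ≤ -c * (α ^ 2) ^ N := by nlinarith
      have hrw : ((eval x q) ^ N) ^ 2 = ((eval x q) ^ 2) ^ N := by
        rw [← pow_mul, ← pow_mul, mul_comm]
      rw [hrw]; linarith
    calc (∫ x in B ∩ Metric.ball x₀ s, f x * ((eval x q) ^ N) ^ 2 ∂μ)
        ≤ ∫ _x in B ∩ Metric.ball x₀ s, -(c * (α ^ 2) ^ N) ∂μ :=
          setIntegral_mono_on (hInt.mono_set Set.inter_subset_left)
            integrableOn_const
            (hBmeas.inter Metric.isOpen_ball.measurableSet) hpt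
      _ = m * (-(c * (α ^ 2) ^ N)) := by
          rw [setIntegral_const, smul_eq_mul, measureReal_def, hmeq]
  -- bound away from the small ball
  have hb2 : (∫ x in B \ Metric.ball x₀ s, f x * ((eval x q) ^ N) ^ 2 ∂μ)
      ≤ MB * (F * (β ^ 2) ^ N) := by
    have hpt : ∀ x ∈ B \ Metric.ball x₀ s,
        f x * ((eval x q) ^ N) ^ 2 ≤ F * (β ^ 2) ^ N := by
      rintro x ⟨hxB, _⟩
      have hg0 : 0 ≤ eval x q := hgB x hxB
      have hrw : ((eval x q) ^ N) ^ 2 = ((eval x q) ^ 2) ^ N := by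
        rw [← pow_mul, ← pow_mul, mul_comm]
      rw [hrw]
      have hBtpow0 : 0 ≤ F * (β ^ 2) ^ N :=
        mul_nonneg hF0.le (pow_nonneg hBt0 N)
      by_cases hxr : x ∈ Metric.ball x₀ r
      · have hfx : f x ≤ -c := (hrball x hxr).le
        have hP : 0 ≤ ((eval x q) ^ 2) ^ N := pow_nonneg (sq_nonneg _) N
        have h1 : f x * ((eval x q) ^ 2) ^ N ≤ 0 :=
          mul_nonpos_of_nonpos_of_nonneg (by linarith) hP
        linarith
      · have hfx : f x ≤ F := hFb x hxB
        have hgβ : eval x q ≤ β := hgout x hxr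
        have h2 : (eval x q) ^ 2 ≤ β ^ 2 := by nlinarith
        have h3 : ((eval x q) ^ 2) ^ N ≤ (β ^ 2) ^ N := pow_le_pow_left₀ (sq_nonneg _) h2 N
        have h4 : f x * ((eval x q) ^ 2) ^ N ≤ F * ((eval x q) ^ 2) ^ N :=
          mul_le_mul_of_nonneg_right hfx (pow_nonneg (sq_nonneg _) N)
        have h5 : F * ((eval x q) ^ 2) ^ N ≤ F * (β ^ 2) ^ N :=
          mul_le_mul_of_nonneg_left h3 hF0.le
        linarith
    calc (∫ x in B \ Metric.ball x₀ s, f x * ((eval x q) ^ N) ^ 2 ∂μ)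
        ≤ ∫ _x in B \ Metric.ball x₀ s, F * (β ^ 2) ^ N ∂μ :=
          setIntegral_mono_on (hInt.mono_set Set.diff_subset)
            integrableOn_const
            (hBmeas.diff Metric.isOpen_ball.measurableSet) hpt
      _ = MB * (F * (β ^ 2) ^ N) := by
          rw [setIntegral_const, smul_eq_mul, measureReal_def, hMBeq]
  -- the contradiction
  have hfinal : m * (-(c * (α ^ 2) ^ N)) + MB * (F * (β ^ 2) ^ N) < 0 := by
    have htN : 0 ≤ t ^ N := pow_nonneg ht0 N
    have h1 : F * MB * t ^ N ≤ (F * MB + 1) * t ^ N := by nlinarith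
    have h2 : (F * MB + 1) * t ^ N < (F * MB + 1) * (c * m / (F * MB + 1)) :=
      mul_lt_mul_of_pos_left hN hFMB
    have h3 : (F * MB + 1) * (c * m / (F * MB + 1)) = c * m := by field_simp
    have h4 : F * MB * t ^ N < c * m := by linarith
    have h5 : m * (-(c * (α ^ 2) ^ N)) + MB * (F * (β ^ 2) ^ N)
        = (α ^ 2) ^ N * (F * MB * t ^ N - c * m) := by
      rw [htβα, mul_pow]; ring
    rw [h5]
    exact mul_neg_of_pos_of_neg hApow (by linarith)
  rw [hsplit] at hint
  linarith
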